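/- Let G=(V,E) be the hypergraph with V = {v_1,…,v_8} and E = {e_0,e_1,e_2,e_3,e_4}, where e_0 = {v_1,v_2,v_3,v_4}, e_1 = {v_1,v_2,v_5}, e_2 = {v_2,v_3,v_6}, e_3 = {v_3,v_4,v_7}, e_4 = {v_1,v_4,v_8}. For every recursive McCormick relaxation of the multilinear set S_G, there exists a point z ∈ MP^RMC_G violating at least one of the six flower inequalities centered at e_0, namely ∑_{v ∈ e_0 \ e_i} z_v + z_{e_i} − z_{e_0} ≤ 2 for i ∈ {1,2,3,4} and z_{e_i} + z_{e_j} − z_{e_0} ≤ 1 for (i,j) ∈ {(1,3),(2,4)}; in particular, the flower relaxation MP^F_G is a strict subset of MP^RMC_G for every RMC of S_G. -/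

import Mathlib

open Finset

/-- A hypergraph: a finite set of nodes together with a set of edges,
each a subset of the nodes of cardinality at least two. -/
structure MHypergraph (α : Type*) [DecidableEq α] where
  V : Finset α
  E : Finset (Finset α)
  edge_sub : ∀ e ∈ E, e ⊆ V
  edge_card : ∀ e ∈ E, 2 ≤ e.card

section Defs

variable {α : Type*} [DecidableEq α]

/-- Membership in the multilinear set `S_G`; a point is encoded as a single function
`z : Finset α → ℝ`, with node variables `z {v}` and edge variables `z e`. -/
def MultilinearSet (G : MHypergraph α) (z : Finset α → ℝ) : Prop :=
  (∀ v ∈ G.V, z {v} = 0 ∨ z {v} = 1) ∧ ∀ e ∈ G.E, z e = ∏ v ∈ e, z {v}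

/-- Membership in the standard linearization `MP^LP_G`. -/
def StdLin (G : MHypergraph α) (z : Finset α → ℝ) : Prop :=
  (∀ v ∈ G.V, z {v} ≤ 1) ∧
    ∀ e ∈ G.E, 0 ≤ z e ∧ (∑ v ∈ e, z {v}) - (e.card : ℝ) + 1 ≤ z e ∧ ∀ v ∈ e, z e ≤ z {v}

/-- The (extended) flower inequality centered at `e₀` with set of neighbors `T`. -/
def ExtFlowerIneq (z : Finset α → ℝ) (e₀ : Finset α) (T : Finset (Finset α)) : Prop :=
  (∑ v ∈ e₀ \ T.biUnion id, z {v}) + (∑ e ∈ T, z e) - z e₀ ≤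
    ((e₀ \ T.biUnion id).card : ℝ) + (T.card : ℝ) - 1

/-- `T` is a valid set of neighbors for an extended flower inequality centered at `e₀`:
a nonempty set of edges, distinct from `e₀`, adjacent to `e₀`, with `γ_i ≥ 2` for all `i ∈ T`. -/
def ValidEFNeighbors (G : MHypergraph α) (e₀ : Finset α) (T : Finset (Finset α)) : Prop :=
  T.Nonempty ∧ (∀ e ∈ T, e ∈ G.E ∧ e ≠ e₀ ∧ (e ∩ e₀).Nonempty) ∧
    ∀ i ∈ T, 2 ≤ ((e₀ ∩ i) \ (T.erase i).biUnion (fun j => e₀ ∩ j)).card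

/-- Membership in the extended flower relaxation `MP^EF_G`. -/
def MPEF (G : MHypergraph α) (z : Finset α → ℝ) : Prop :=
  StdLin G z ∧ ∀ e₀ ∈ G.E, ∀ T : Finset (Finset α), ValidEFNeighbors G e₀ T → ExtFlowerIneq z e₀ T

/-- `T` is a valid set of neighbors for a flower inequality centered at `e₀`. -/
def ValidFlowerNeighbors (G : MHypergraph α) (e₀ : Finset α) (T : Finset (Finset α)) : Prop :=
  T.Nonempty ∧ (∀ e ∈ T, e ∈ G.E ∧ e ≠ e₀ ∧ 2 ≤ (e₀ ∩ e).card) ∧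
    ∀ i ∈ T, ∀ j ∈ T, i ≠ j → e₀ ∩ i ∩ j = ∅

/-- Membership in the flower relaxation `MP^F_G`. -/
def MPF (G : MHypergraph α) (z : Finset α → ℝ) : Prop :=
  StdLin G z ∧ ∀ e₀ ∈ G.E, ∀ T : Finset (Finset α), ValidFlowerNeighbors G e₀ T → ExtFlowerIneq z e₀ T

/-- A recursive McCormick relaxation (RMC) of the multilinear set `S_G`:
a set `Ebar` of artificial edges together with, for each `f ∈ E ∪ Ebar`,
a partition `f = J f ∪ K f` into two disjoint nonempty parts, each a singleton
or an element of `E ∪ Ebar`, such that every artificial edge is reachable from some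
edge of `E` by iteratively passing to non-singleton parts. -/
structure RMC {α : Type*} [DecidableEq α] (G : MHypergraph α) where
  Ebar : Finset (Finset α)
  ebar_sub : ∀ f ∈ Ebar, f ⊆ G.V
  ebar_card : ∀ f ∈ Ebar, 2 ≤ f.card
  ebar_new : ∀ f ∈ Ebar, f ∉ G.E
  J : Finset α → Finset α
  K : Finset α → Finset α
  union_eq : ∀ f ∈ G.E ∪ Ebar, J f ∪ K f = f
  disj : ∀ f ∈ G.E ∪ Ebar, Disjoint (J f) (K f)
  J_ne : ∀ f ∈ G.E ∪ Ebar, (J f).Nonempty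
  K_ne : ∀ f ∈ G.E ∪ Ebar, (K f).Nonempty
  J_mem : ∀ f ∈ G.E ∪ Ebar, (J f).card = 1 ∨ J f ∈ G.E ∪ Ebar
  K_mem : ∀ f ∈ G.E ∪ Ebar, (K f).card = 1 ∨ K f ∈ G.E ∪ Ebar
  reach : ∀ f ∈ Ebar, ∃ e ∈ G.E, Relation.ReflTransGen
    (fun a b => a ∈ G.E ∪ Ebar ∧ 2 ≤ b.card ∧ (b = J a ∨ b = K a)) e f

/-- One step of the recursive decomposition: passing from `a` to a non-singleton part of it. -/
def RMC.step {α : Type*} [DecidableEq α] {G : MHypergraph α} (M : RMC G) (a b : Finset α) : Prop :=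
  a ∈ G.E ∪ M.Ebar ∧ 2 ≤ b.card ∧ (b = M.J a ∨ b = M.K a)

/-- The recursive sequence `R_e` of `e`: all sets obtained from `e` by iteratively
passing to non-singleton parts of the partitions (with `e ∈ R_e`). -/
def RMC.Rseq {α : Type*} [DecidableEq α] {G : MHypergraph α} (M : RMC G) (e : Finset α) :
    Set (Finset α) :=
  {f | Relation.ReflTransGen M.step e f}

/-- The RMC is non-overlapping if the recursive sequences of distinct edges are disjoint. -/
def RMC.NonOverlapping {α : Type*} [DecidableEq α] {G : MHypergraph α} (M : RMC G) : Prop :=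
  ∀ e ∈ G.E, ∀ e' ∈ G.E, e ≠ e' → M.Rseq e ∩ M.Rseq e' = ∅

/-- The point `w` (including artificial coordinates) satisfies all McCormick
inequalities of the RMC. -/
def RMC.McCormick {α : Type*} [DecidableEq α] {G : MHypergraph α} (M : RMC G)
    (w : Finset α → ℝ) : Prop :=
  ∀ f ∈ G.E ∪ M.Ebar,
    0 ≤ w f ∧ w (M.J f) + w (M.K f) - 1 ≤ w f ∧ w f ≤ w (M.J f) ∧ w f ≤ w (M.K f)

/-- Membership in `MP^RMC_G`, the projection of the RMC polytope onto the coordinates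
indexed by `V ∪ E`: the point `z` admits an extension to the artificial variables
satisfying all McCormick inequalities of the RMC. -/
def RMC.MPRMC {α : Type*} [DecidableEq α] {G : MHypergraph α} (M : RMC G)
    (z : Finset α → ℝ) : Prop :=
  ∃ w : Finset α → ℝ, (∀ v ∈ G.V, w {v} = z {v}) ∧ (∀ e ∈ G.E, w e = z e) ∧ M.McCormick w

/-- A flower partition `Te` of the edge `e`: a partition of `e` into pairwise disjoint
nonempty parts, each a singleton subset of `e` or an element of `R_e`, such that every
part lying in `Ebar` belongs to the recursive sequence of some other original edge. -/
def RMC.FlowerPartition {α : Type*} [DecidableEq α] {G : MHypergraph α} (M : RMC G)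
    (e : Finset α) (Te : Finset (Finset α)) : Prop :=
  (∀ p ∈ Te, p.Nonempty) ∧
  (∀ p ∈ Te, ∀ q ∈ Te, p ≠ q → Disjoint p q) ∧
  Te.biUnion id = e ∧
  (∀ p ∈ Te, (p.card = 1 ∧ p ⊆ e) ∨ p ∈ M.Rseq e) ∧
  ∀ p ∈ Te, p ∈ M.Ebar → ∃ e' ∈ G.E, e' ≠ e ∧ p ∈ M.Rseq e'

/-- The McCormick system for the bilinear equation `w = u * v` over the unit hypercube. -/
def McSys (u v w : ℝ) : Prop := 0 ≤ w ∧ u + v - 1 ≤ w ∧ w ≤ u ∧ w ≤ v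

end Defs


def f₀ : Finset ℕ := {1,2,3,4}
def f₁ : Finset ℕ := {1,2,5}
def f₂ : Finset ℕ := {2,3,6}
def f₃ : Finset ℕ := {3,4,7}
def f₄ : Finset ℕ := {1,4,8}

def G18 : MHypergraph ℕ where
  V := {1,2,3,4,5,6,7,8}
  E := {f₀, f₁, f₂, f₃, f₄}
  edge_sub := by decide
  edge_card := by decide

section Part1Aux

lemma step_subset {M : RMC G18} {a b : Finset ℕ} (h : M.step a b) : b ⊆ a := by
  obtain ⟨hmem, -, hb⟩ := h
  have hu := M.union_eq _ hmem
  rcases hb with rfl | rfl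
  · conv_rhs => rw [← hu]
    exact Finset.subset_union_left
  · conv_rhs => rw [← hu]
    exact Finset.subset_union_right

lemma rseq_subset {M : RMC G18} {S T : Finset ℕ} (h : T ∈ M.Rseq S) : T ⊆ S := by
  have h' : Relation.ReflTransGen M.step S T := h
  clear h
  induction h' with
  | refl => exact subset_rfl
  | tail _ h2 ih => exact (step_subset h2).trans ih

lemma key (M : RMC G18) (a b m c d : ℕ) (k : Finset ℕ)
    (hkE : k ∈ G18.E) (hk4 : k ∈ ({f₁, f₂, f₃, f₄} : Finset (Finset ℕ)))
    (hkeq : k = {a, b, m}) (hcd : f₀ \ k = {c, d}) (hint : f₀ ∩ k = {a, b})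
    (hab : a ≠ b) (hma : m ≠ a) (hmb : m ≠ b)
    (hca : c ≠ a) (hcb : c ≠ b) (hda : d ≠ a) (hdb : d ≠ b) (hcdne : c ≠ d)
    (hknef0 : k ≠ f₀)
    (hJ : ∃ u ∈ M.J f₀, u = a ∨ u = b) (hK : ∃ u ∈ M.K f₀, u = a ∨ u = b) :
    ∃ z : Finset ℕ → ℝ, M.MPRMC z ∧
      ¬ ((∀ e ∈ ({f₁, f₂, f₃, f₄} : Finset (Finset ℕ)),
            (∑ v ∈ f₀ \ e, z {v}) + z e - z f₀ ≤ 2) ∧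
          z f₁ + z f₃ - z f₀ ≤ 1 ∧ z f₂ + z f₄ - z f₀ ≤ 1) ∧
      ¬ MPF G18 z := by
  classical
  set x : ℕ → ℝ := fun v => if v = a ∨ v = b then 1/2 else 1 with hxdef
  have hx0 : ∀ v, 0 ≤ x v := by
    intro v; by_cases h : v = a ∨ v = b <;> simp [hxdef, h] <;> norm_num
  have hx1 : ∀ v, x v ≤ 1 := by
    intro v; by_cases h : v = a ∨ v = b <;> simp [hxdef, h] <;> norm_num
  set w : Finset ℕ → ℝ := fun S => if f₀ ∈ M.Rseq S then 0 else ∏ v ∈ S, x v with hwdef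
  have hprod0 : ∀ S : Finset ℕ, 0 ≤ ∏ v ∈ S, x v :=
    fun S => Finset.prod_nonneg (fun v _ => hx0 v)
  have hprod1 : ∀ S : Finset ℕ, ∏ v ∈ S, x v ≤ 1 :=
    fun S => Finset.prod_le_one (fun v _ => hx0 v) (fun v _ => hx1 v)
  have hw0 : ∀ S, 0 ≤ w S := by
    intro S; rw [hwdef]; dsimp only; split
    · exact le_refl 0
    · exact hprod0 S
  have hw1 : ∀ S, w S ≤ 1 := by
    intro S; rw [hwdef]; dsimp only; split
    · exact zero_le_one
    · exact hprod1 S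
  have hwle : ∀ (S : Finset ℕ) (u : ℕ), u ∈ S → w S ≤ x u := by
    intro S u hu
    rw [hwdef]; dsimp only; split
    · exact hx0 u
    · rw [← Finset.mul_prod_erase S x hu]
      have h1 : ∏ v ∈ S.erase u, x v ≤ 1 :=
        Finset.prod_le_one (fun v _ => hx0 v) (fun v _ => hx1 v)
      calc x u * ∏ v ∈ S.erase u, x v ≤ x u * 1 :=
            mul_le_mul_of_nonneg_left h1 (hx0 u)
        _ = x u := mul_one _
  have hcard_notreach : ∀ S : Finset ℕ, S.card ≤ 3 → f₀ ∉ M.Rseq S := by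
    intro S hS hr
    have h4 := Finset.card_le_card (rseq_subset hr)
    have hf4 : f₀.card = 4 := by decide
    omega
  have hwf0 : w f₀ = 0 := by
    rw [hwdef]; dsimp only; rw [if_pos]; exact Relation.ReflTransGen.refl
  have hsingle : ∀ v : ℕ, w {v} = x v := by
    intro v
    rw [hwdef]; dsimp only
    rw [if_neg (hcard_notreach {v} (by simp)), Finset.prod_singleton]
  have hxa : x a = 1/2 := by simp [hxdef]
  have hxb : x b = 1/2 := by simp [hxdef]
  have hxc : x c = 1 := by simp [hxdef, hca, hcb]
  have hxd : x d = 1 := by simp [hxdef, hda, hdb]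
  have hxm : x m = 1 := by simp [hxdef, hma, hmb]
  have hwk : w k = 1/4 := by
    have hk3 : k.card ≤ 3 := by
      rw [hkeq]
      refine le_trans (Finset.card_insert_le _ _) ?_
      refine le_trans (Nat.succ_le_succ (Finset.card_insert_le _ _)) ?_
      simp
    rw [hwdef]; dsimp only
    rw [if_neg (hcard_notreach k hk3), hkeq]
    have hanm : a ∉ ({b, m} : Finset ℕ) := by
      simp only [Finset.mem_insert, Finset.mem_singleton]
      rintro (h | h)
      · exact hab h
      · exact hma h.symm
    have hbnm : b ∉ ({m} : Finset ℕ) := by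
      simp only [Finset.mem_singleton]
      exact fun h => hmb h.symm
    rw [Finset.prod_insert hanm, Finset.prod_insert hbnm, Finset.prod_singleton,
      hxa, hxb, hxm]
    norm_num
  -- McCormick
  have hMc : M.McCormick w := by
    intro f hf
    have hun := M.union_eq f hf
    have hdisj := M.disj f hf
    by_cases hr : f₀ ∈ M.Rseq f
    · have hwf : w f = 0 := by rw [hwdef]; dsimp only; rw [if_pos hr]
      have hr' : Relation.ReflTransGen M.step f f₀ := hr
      rcases Relation.ReflTransGen.cases_head hr' with heq | ⟨cc, hstep, hrest⟩
      · -- f₀ = f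
        subst heq
        obtain ⟨uJ, huJ, huJab⟩ := hJ
        obtain ⟨uK, huK, huKab⟩ := hK
        have hxuJ : x uJ = 1/2 := by rcases huJab with rfl | rfl <;> [exact hxa; exact hxb]
        have hxuK : x uK = 1/2 := by rcases huKab with rfl | rfl <;> [exact hxa; exact hxb]
        have h1 : w (M.J f₀) ≤ 1/2 := by rw [← hxuJ]; exact hwle _ _ huJ
        have h2 : w (M.K f₀) ≤ 1/2 := by rw [← hxuK]; exact hwle _ _ huK
        refine ⟨by rw [hwf], by rw [hwf]; linarith, ?_, ?_⟩
        · rw [hwf]; exact hw0 _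
        · rw [hwf]; exact hw0 _
      · have hc0 : w cc = 0 := by
          rw [hwdef]; dsimp only; rw [if_pos]; exact hrest
        obtain ⟨-, -, hcJK⟩ := hstep
        rcases hcJK with rfl | rfl
        · exact ⟨by rw [hwf], by rw [hwf, hc0]; linarith [hw1 (M.K f)],
            by rw [hwf, hc0], by rw [hwf]; exact hw0 _⟩
        · exact ⟨by rw [hwf], by rw [hwf, hc0]; linarith [hw1 (M.J f)],
            by rw [hwf]; exact hw0 _, by rw [hwf, hc0]⟩
    · have hwf : w f = ∏ v ∈ f, x v := by rw [hwdef]; dsimp only; rw [if_neg hr]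
      have hf04 : f₀.card = 4 := by decide
      have hJr : f₀ ∉ M.Rseq (M.J f) := by
        intro h
        apply hr
        have hcard : 2 ≤ (M.J f).card := by
          have := Finset.card_le_card (rseq_subset h); omega
        exact Relation.ReflTransGen.head ⟨hf, hcard, Or.inl rfl⟩ h
      have hKr : f₀ ∉ M.Rseq (M.K f) := by
        intro h
        apply hr
        have hcard : 2 ≤ (M.K f).card := by
          have := Finset.card_le_card (rseq_subset h); omega
        exact Relation.ReflTransGen.head ⟨hf, hcard, Or.inr rfl⟩ h
      have hwJ : w (M.J f) = ∏ v ∈ M.J f, x v := by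
        rw [hwdef]; dsimp only; rw [if_neg hJr]
      have hwK : w (M.K f) = ∏ v ∈ M.K f, x v := by
        rw [hwdef]; dsimp only; rw [if_neg hKr]
      have hmul : w f = w (M.J f) * w (M.K f) := by
        rw [hwf, hwJ, hwK, ← Finset.prod_union hdisj, hun]
      have h0J := hw0 (M.J f); have h1J := hw1 (M.J f)
      have h0K := hw0 (M.K f); have h1K := hw1 (M.K f)
      refine ⟨hw0 f, ?_, ?_, ?_⟩
      · rw [hmul]; nlinarith
      · rw [hmul]; nlinarith
      · rw [hmul]; nlinarith
  -- the violated flower value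
  have hsumcd : (∑ v ∈ f₀ \ k, w {v}) = 2 := by
    rw [hcd, Finset.sum_pair hcdne, hsingle, hsingle, hxc, hxd]; norm_num
  refine ⟨w, ⟨w, fun _ _ => rfl, fun _ _ => rfl, hMc⟩, ?_, ?_⟩
  · rintro ⟨h1, -, -⟩
    have := h1 k hk4
    rw [hsumcd, hwk, hwf0] at this
    norm_num at this
  · rintro ⟨-, hfl⟩
    have hvalid : ValidFlowerNeighbors G18 f₀ {k} := by
      refine ⟨⟨k, Finset.mem_singleton_self k⟩, ?_, ?_⟩
      · intro e he
        rw [Finset.mem_singleton] at he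
        subst he
        refine ⟨hkE, hknef0, ?_⟩
        have : (f₀ ∩ e).card = 2 := by rw [hint]; exact Finset.card_pair hab
        omega
      · intro i hi j hj hij
        rw [Finset.mem_singleton] at hi hj
        exact absurd (hi.trans hj.symm) hij
    have hineq := hfl f₀ (by decide) {k} hvalid
    unfold ExtFlowerIneq at hineq
    rw [Finset.singleton_biUnion, id_eq, hcd, Finset.sum_pair hcdne,
      Finset.sum_singleton, Finset.card_singleton, Finset.card_pair hcdne] at hineq
    rw [hsingle, hsingle, hxc, hxd] at hineq
    rw [hwk, hwf0] at hineq
    norm_num at hineq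

end Part1Aux

lemma choose_pair (J K : Finset ℕ) (hun : J ∪ K = f₀) (hdisj : Disjoint J K)
    (hJ : J.Nonempty) (hK : K.Nonempty) :
    ∃ a b : ℕ, (∃ u ∈ J, u = a ∨ u = b) ∧ (∃ u ∈ K, u = a ∨ u = b) ∧
      ((a = 1 ∧ b = 2) ∨ (a = 2 ∧ b = 3) ∨ (a = 3 ∧ b = 4) ∨ (a = 1 ∧ b = 4)) := by
  have hmem : ∀ i ∈ f₀, i ∈ J ∨ i ∈ K := by
    intro i hi; rw [← hun] at hi; exact Finset.mem_union.mp hi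
  have hf : ∀ i ∈ f₀, i ∉ J → i ∈ K := fun i hi hiJ => (hmem i hi).resolve_left hiJ
  have h1f : (1:ℕ) ∈ f₀ := by decide
  have h2f : (2:ℕ) ∈ f₀ := by decide
  have h3f : (3:ℕ) ∈ f₀ := by decide
  have h4f : (4:ℕ) ∈ f₀ := by decide
  by_cases h1 : 1 ∈ J <;> by_cases h2 : 2 ∈ J <;> by_cases h3 : 3 ∈ J <;> by_cases h4 : 4 ∈ J
  -- TTTT
  · obtain ⟨u, hu⟩ := hK
    have huf : u ∈ f₀ := by rw [← hun]; exact Finset.mem_union_right _ hu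
    have hun' : u = 1 ∨ u = 2 ∨ u = 3 ∨ u = 4 := by
      have : f₀ = {1,2,3,4} := rfl
      rw [this] at huf; simpa using huf
    have hnot : ∀ i, i ∈ J → i ∉ K := fun i hiJ hiK => Finset.disjoint_left.mp hdisj hiJ hiK
    rcases hun' with rfl | rfl | rfl | rfl
    · exact absurd hu (hnot _ h1)
    · exact absurd hu (hnot _ h2)
    · exact absurd hu (hnot _ h3)
    · exact absurd hu (hnot _ h4)
  -- TTTF
  · exact ⟨3, 4, ⟨3, h3, Or.inl rfl⟩, ⟨4, hf 4 h4f h4, Or.inr rfl⟩, by tauto⟩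
  -- TTFT
  · exact ⟨2, 3, ⟨2, h2, Or.inl rfl⟩, ⟨3, hf 3 h3f h3, Or.inr rfl⟩, by tauto⟩
  -- TTFF
  · exact ⟨2, 3, ⟨2, h2, Or.inl rfl⟩, ⟨3, hf 3 h3f h3, Or.inr rfl⟩, by tauto⟩
  -- TFTT
  · exact ⟨1, 2, ⟨1, h1, Or.inl rfl⟩, ⟨2, hf 2 h2f h2, Or.inr rfl⟩, by tauto⟩
  -- TFTF
  · exact ⟨1, 2, ⟨1, h1, Or.inl rfl⟩, ⟨2, hf 2 h2f h2, Or.inr rfl⟩, by tauto⟩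
  -- TFFT
  · exact ⟨1, 2, ⟨1, h1, Or.inl rfl⟩, ⟨2, hf 2 h2f h2, Or.inr rfl⟩, by tauto⟩
  -- TFFF
  · exact ⟨1, 2, ⟨1, h1, Or.inl rfl⟩, ⟨2, hf 2 h2f h2, Or.inr rfl⟩, by tauto⟩
  -- FTTT
  · exact ⟨1, 2, ⟨2, h2, Or.inr rfl⟩, ⟨1, hf 1 h1f h1, Or.inl rfl⟩, by tauto⟩
  -- FTTF
  · exact ⟨1, 2, ⟨2, h2, Or.inr rfl⟩, ⟨1, hf 1 h1f h1, Or.inl rfl⟩, by tauto⟩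
  -- FTFT
  · exact ⟨1, 2, ⟨2, h2, Or.inr rfl⟩, ⟨1, hf 1 h1f h1, Or.inl rfl⟩, by tauto⟩
  -- FTFF
  · exact ⟨1, 2, ⟨2, h2, Or.inr rfl⟩, ⟨1, hf 1 h1f h1, Or.inl rfl⟩, by tauto⟩
  -- FFTT
  · exact ⟨2, 3, ⟨3, h3, Or.inr rfl⟩, ⟨2, hf 2 h2f h2, Or.inl rfl⟩, by tauto⟩
  -- FFTF
  · exact ⟨2, 3, ⟨3, h3, Or.inr rfl⟩, ⟨2, hf 2 h2f h2, Or.inl rfl⟩, by tauto⟩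
  -- FFFT
  · exact ⟨3, 4, ⟨4, h4, Or.inr rfl⟩, ⟨3, hf 3 h3f h3, Or.inl rfl⟩, by tauto⟩
  -- FFFF
  · obtain ⟨u, hu⟩ := hJ
    have huf : u ∈ f₀ := by rw [← hun]; exact Finset.mem_union_left _ hu
    have hun' : u = 1 ∨ u = 2 ∨ u = 3 ∨ u = 4 := by
      have : f₀ = {1,2,3,4} := rfl
      rw [this] at huf; simpa using huf
    rcases hun' with rfl | rfl | rfl | rfl
    · exact absurd hu h1
    · exact absurd hu h2
    · exact absurd hu h3
    · exact absurd hu h4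

lemma part1 (M : RMC G18) :
    ∃ z : Finset ℕ → ℝ, M.MPRMC z ∧
      ¬ ((∀ e ∈ ({f₁, f₂, f₃, f₄} : Finset (Finset ℕ)),
            (∑ v ∈ f₀ \ e, z {v}) + z e - z f₀ ≤ 2) ∧
          z f₁ + z f₃ - z f₀ ≤ 1 ∧ z f₂ + z f₄ - z f₀ ≤ 1) ∧
      ¬ MPF G18 z := by
  have hf0mem : f₀ ∈ G18.E ∪ M.Ebar := Finset.mem_union_left _ (by decide)
  obtain ⟨a, b, hJw, hKw, hcase⟩ :=
    choose_pair (M.J f₀) (M.K f₀) (M.union_eq f₀ hf0mem) (M.disj f₀ hf0mem)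
      (M.J_ne f₀ hf0mem) (M.K_ne f₀ hf0mem)
  rcases hcase with ⟨rfl, rfl⟩ | ⟨rfl, rfl⟩ | ⟨rfl, rfl⟩ | ⟨rfl, rfl⟩
  · exact key M 1 2 5 3 4 f₁ (by decide) (by decide) (by decide) (by decide) (by decide)
      (by decide) (by decide) (by decide) (by decide) (by decide) (by decide) (by decide)
      (by decide) (by decide) hJw hKw
  · exact key M 2 3 6 1 4 f₂ (by decide) (by decide) (by decide) (by decide) (by decide)
      (by decide) (by decide) (by decide) (by decide) (by decide) (by decide) (by decide)
      (by decide) (by decide) hJw hKw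
  · exact key M 3 4 7 1 2 f₃ (by decide) (by decide) (by decide) (by decide) (by decide)
      (by decide) (by decide) (by decide) (by decide) (by decide) (by decide) (by decide)
      (by decide) (by decide) hJw hKw
  · exact key M 1 4 8 2 3 f₄ (by decide) (by decide) (by decide) (by decide) (by decide)
      (by decide) (by decide) (by decide) (by decide) (by decide) (by decide) (by decide)
      (by decide) (by decide) hJw hKw

section Part2Aux

abbrev B5 : Type := Bool × Bool × Bool × Bool × Bool

/-- The union of the edges selected by `b`. -/
def UU (b : B5) : Finset ℕ :=
  (cond b.1 f₀ ∅) ∪ (cond b.2.1 f₁ ∅) ∪ (cond b.2.2.1 f₂ ∅) ∪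
    (cond b.2.2.2.1 f₃ ∅) ∪ (cond b.2.2.2.2 f₄ ∅)

/-- A generator linear form for the extension. -/
noncomputable def gg (z : Finset ℕ → ℝ) (b : B5) (S : Finset ℕ) : ℝ :=
  1 + cond b.1 (z f₀ - 1) 0 + cond b.2.1 (z f₁ - 1) 0 + cond b.2.2.1 (z f₂ - 1) 0
    + cond b.2.2.2.1 (z f₃ - 1) 0 + cond b.2.2.2.2 (z f₄ - 1) 0
    + ∑ v ∈ S, (if v ∈ UU b then (0:ℝ) else z {v} - 1)

/-- The extension to artificial coordinates. -/
noncomputable def ww (z : Finset ℕ → ℝ) (S : Finset ℕ) : ℝ :=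
  max 0 (Finset.univ.sup' Finset.univ_nonempty fun b : B5 => gg z b S)

lemma mem_cond {v : ℕ} {bb : Bool} {s : Finset ℕ} :
    v ∈ (cond bb s ∅) ↔ bb = true ∧ v ∈ s := by
  cases bb <;> simp

lemma mem_UU {v : ℕ} {b : B5} :
    v ∈ UU b ↔ (b.1 = true ∧ v ∈ f₀) ∨ (b.2.1 = true ∧ v ∈ f₁) ∨ (b.2.2.1 = true ∧ v ∈ f₂)
      ∨ (b.2.2.2.1 = true ∧ v ∈ f₃) ∨ (b.2.2.2.2 = true ∧ v ∈ f₄) := by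
  simp only [UU, Finset.mem_union, mem_cond]
  tauto

lemma UU_or_left (b0 b1 b2 b3 b4 c0 c1 c2 c3 c4 : Bool) :
    UU (b0, b1, b2, b3, b4) ⊆ UU (b0 || c0, b1 || c1, b2 || c2, b3 || c3, b4 || c4) := by
  intro v hv
  rw [mem_UU] at hv ⊢
  simp only [Bool.or_eq_true] at *
  tauto

lemma UU_or_right (b0 b1 b2 b3 b4 c0 c1 c2 c3 c4 : Bool) :
    UU (c0, c1, c2, c3, c4) ⊆ UU (b0 || c0, b1 || c1, b2 || c2, b3 || c3, b4 || c4) := by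
  intro v hv
  rw [mem_UU] at hv ⊢
  simp only [Bool.or_eq_true] at *
  tauto

lemma sum_f₀ (t : ℕ → ℝ) : ∑ v ∈ f₀, t v = t 1 + t 2 + t 3 + t 4 := by
  show ∑ v ∈ ({1,2,3,4} : Finset ℕ), t v = _
  rw [Finset.sum_insert (by decide), Finset.sum_insert (by decide),
    Finset.sum_insert (by decide), Finset.sum_singleton]
  ring

lemma sum_f₁ (t : ℕ → ℝ) : ∑ v ∈ f₁, t v = t 1 + t 2 + t 5 := by
  show ∑ v ∈ ({1,2,5} : Finset ℕ), t v = _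
  rw [Finset.sum_insert (by decide), Finset.sum_insert (by decide), Finset.sum_singleton]
  ring

lemma sum_f₂ (t : ℕ → ℝ) : ∑ v ∈ f₂, t v = t 2 + t 3 + t 6 := by
  show ∑ v ∈ ({2,3,6} : Finset ℕ), t v = _
  rw [Finset.sum_insert (by decide), Finset.sum_insert (by decide), Finset.sum_singleton]
  ring

lemma sum_f₃ (t : ℕ → ℝ) : ∑ v ∈ f₃, t v = t 3 + t 4 + t 7 := by
  show ∑ v ∈ ({3,4,7} : Finset ℕ), t v = _
  rw [Finset.sum_insert (by decide), Finset.sum_insert (by decide), Finset.sum_singleton]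
  ring

lemma sum_f₄ (t : ℕ → ℝ) : ∑ v ∈ f₄, t v = t 1 + t 4 + t 8 := by
  show ∑ v ∈ ({1,4,8} : Finset ℕ), t v = _
  rw [Finset.sum_insert (by decide), Finset.sum_insert (by decide), Finset.sum_singleton]
  ring

set_option maxHeartbeats 3200000 in
lemma part2 (M : RMC G18) (z : Finset ℕ → ℝ) (hz : MPF G18 z) : M.MPRMC z := by
  obtain ⟨⟨hxle, hstd⟩, hfl⟩ := hz
  have e0E : f₀ ∈ G18.E := by decide
  have e1E : f₁ ∈ G18.E := by decide
  have e2E : f₂ ∈ G18.E := by decide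
  have e3E : f₃ ∈ G18.E := by decide
  have e4E : f₄ ∈ G18.E := by decide
  have hub : ∀ e ∈ G18.E, ∀ v ∈ e, z e ≤ z {v} := fun e he => (hstd e he).2.2
  -- instantiated upper bounds
  have hu01 : z f₀ ≤ z {1} := hub f₀ e0E 1 (by decide)
  have hu02 : z f₀ ≤ z {2} := hub f₀ e0E 2 (by decide)
  have hu03 : z f₀ ≤ z {3} := hub f₀ e0E 3 (by decide)
  have hu04 : z f₀ ≤ z {4} := hub f₀ e0E 4 (by decide)
  have hu11 : z f₁ ≤ z {1} := hub f₁ e1E 1 (by decide)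
  have hu12 : z f₁ ≤ z {2} := hub f₁ e1E 2 (by decide)
  have hu15 : z f₁ ≤ z {5} := hub f₁ e1E 5 (by decide)
  have hu22 : z f₂ ≤ z {2} := hub f₂ e2E 2 (by decide)
  have hu23 : z f₂ ≤ z {3} := hub f₂ e2E 3 (by decide)
  have hu26 : z f₂ ≤ z {6} := hub f₂ e2E 6 (by decide)
  have hu33 : z f₃ ≤ z {3} := hub f₃ e3E 3 (by decide)
  have hu34 : z f₃ ≤ z {4} := hub f₃ e3E 4 (by decide)
  have hu37 : z f₃ ≤ z {7} := hub f₃ e3E 7 (by decide)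
  have hu41 : z f₄ ≤ z {1} := hub f₄ e4E 1 (by decide)
  have hu44 : z f₄ ≤ z {4} := hub f₄ e4E 4 (by decide)
  have hu48 : z f₄ ≤ z {8} := hub f₄ e4E 8 (by decide)
  have hx11 : z {1} ≤ 1 := hxle 1 (by decide)
  have hx12 : z {2} ≤ 1 := hxle 2 (by decide)
  have hx13 : z {3} ≤ 1 := hxle 3 (by decide)
  have hx14 : z {4} ≤ 1 := hxle 4 (by decide)
  have hx15 : z {5} ≤ 1 := hxle 5 (by decide)
  have hx16 : z {6} ≤ 1 := hxle 6 (by decide)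
  have hx17 : z {7} ≤ 1 := hxle 7 (by decide)
  have hx18 : z {8} ≤ 1 := hxle 8 (by decide)
  have hn0 : 0 ≤ z f₀ := (hstd f₀ e0E).1
  have hn1 : 0 ≤ z f₁ := (hstd f₁ e1E).1
  have hn2 : 0 ≤ z f₂ := (hstd f₂ e2E).1
  have hn3 : 0 ≤ z f₃ := (hstd f₃ e3E).1
  have hn4 : 0 ≤ z f₄ := (hstd f₄ e4E).1
  have hzle1 : ∀ e ∈ G18.E, z e ≤ 1 := by
    intro e he
    have he' : e = f₀ ∨ e = f₁ ∨ e = f₂ ∨ e = f₃ ∨ e = f₄ := by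
      have hE : G18.E = {f₀, f₁, f₂, f₃, f₄} := rfl
      rw [hE] at he
      simpa using he
    rcases he' with rfl | rfl | rfl | rfl | rfl
    · linarith
    · linarith
    · linarith
    · linarith
    · linarith
  have hx0 : ∀ v ∈ G18.V, 0 ≤ z {v} := by
    intro v hv
    have hv' : v = 1 ∨ v = 2 ∨ v = 3 ∨ v = 4 ∨ v = 5 ∨ v = 6 ∨ v = 7 ∨ v = 8 := by
      have hV : G18.V = {1,2,3,4,5,6,7,8} := rfl
      rw [hV] at hv
      simpa using hv
    rcases hv' with rfl | rfl | rfl | rfl | rfl | rfl | rfl | rfl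
    · linarith
    · linarith
    · linarith
    · linarith
    · linarith
    · linarith
    · linarith
    · linarith
  -- lower bounds from the standard linearization
  have hcard0 : (f₀.card : ℝ) = 4 := by rw [show f₀.card = 4 from by decide]; norm_num
  have hcard1 : (f₁.card : ℝ) = 3 := by rw [show f₁.card = 3 from by decide]; norm_num
  have hcard2 : (f₂.card : ℝ) = 3 := by rw [show f₂.card = 3 from by decide]; norm_num
  have hcard3 : (f₃.card : ℝ) = 3 := by rw [show f₃.card = 3 from by decide]; norm_num
  have hcard4 : (f₄.card : ℝ) = 3 := by rw [show f₄.card = 3 from by decide]; norm_num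
  have hl0 := (hstd f₀ e0E).2.1
  rw [sum_f₀, hcard0] at hl0
  have hl1 := (hstd f₁ e1E).2.1
  rw [sum_f₁, hcard1] at hl1
  have hl2 := (hstd f₂ e2E).2.1
  rw [sum_f₂, hcard2] at hl2
  have hl3 := (hstd f₃ e3E).2.1
  rw [sum_f₃, hcard3] at hl3
  have hl4 := (hstd f₄ e4E).2.1
  rw [sum_f₄, hcard4] at hl4
  -- flower inequalities
  have hF1 : z {3} + z {4} + z f₁ - z f₀ ≤ 2 := by
    have h := hfl f₀ e0E {f₁} (by unfold ValidFlowerNeighbors; decide)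
    unfold ExtFlowerIneq at h
    rw [Finset.singleton_biUnion, id_eq,
      show f₀ \ f₁ = ({3, 4} : Finset ℕ) from by decide,
      Finset.sum_pair (by norm_num : (3:ℕ) ≠ 4), Finset.sum_singleton,
      Finset.card_singleton, show (({3,4} : Finset ℕ)).card = 2 from by decide] at h
    norm_num at h
    linarith
  have hF2 : z {1} + z {4} + z f₂ - z f₀ ≤ 2 := by
    have h := hfl f₀ e0E {f₂} (by unfold ValidFlowerNeighbors; decide)
    unfold ExtFlowerIneq at h
    rw [Finset.singleton_biUnion, id_eq,
      show f₀ \ f₂ = ({1, 4} : Finset ℕ) from by decide,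
      Finset.sum_pair (by norm_num : (1:ℕ) ≠ 4), Finset.sum_singleton,
      Finset.card_singleton, show (({1,4} : Finset ℕ)).card = 2 from by decide] at h
    norm_num at h
    linarith
  have hF3 : z {1} + z {2} + z f₃ - z f₀ ≤ 2 := by
    have h := hfl f₀ e0E {f₃} (by unfold ValidFlowerNeighbors; decide)
    unfold ExtFlowerIneq at h
    rw [Finset.singleton_biUnion, id_eq,
      show f₀ \ f₃ = ({1, 2} : Finset ℕ) from by decide,
      Finset.sum_pair (by norm_num : (1:ℕ) ≠ 2), Finset.sum_singleton,
      Finset.card_singleton, show (({1,2} : Finset ℕ)).card = 2 from by decide] at h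
    norm_num at h
    linarith
  have hF4 : z {2} + z {3} + z f₄ - z f₀ ≤ 2 := by
    have h := hfl f₀ e0E {f₄} (by unfold ValidFlowerNeighbors; decide)
    unfold ExtFlowerIneq at h
    rw [Finset.singleton_biUnion, id_eq,
      show f₀ \ f₄ = ({2, 3} : Finset ℕ) from by decide,
      Finset.sum_pair (by norm_num : (2:ℕ) ≠ 3), Finset.sum_singleton,
      Finset.card_singleton, show (({2,3} : Finset ℕ)).card = 2 from by decide] at h
    norm_num at h
    linarith
  have hF13 : z f₁ + z f₃ - z f₀ ≤ 1 := by
    have h := hfl f₀ e0E {f₁, f₃} (by unfold ValidFlowerNeighbors; decide)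
    unfold ExtFlowerIneq at h
    rw [show (({f₁, f₃} : Finset (Finset ℕ)).biUnion id) = ({1,2,5,3,4,7} : Finset ℕ)
        from by decide,
      show f₀ \ ({1,2,5,3,4,7} : Finset ℕ) = (∅ : Finset ℕ) from by decide,
      Finset.sum_empty, Finset.card_empty,
      Finset.sum_pair (show f₁ ≠ f₃ from by decide),
      show (({f₁, f₃} : Finset (Finset ℕ))).card = 2 from by decide] at h
    norm_num at h
    linarith
  have hF24 : z f₂ + z f₄ - z f₀ ≤ 1 := by
    have h := hfl f₀ e0E {f₂, f₄} (by unfold ValidFlowerNeighbors; decide)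
    unfold ExtFlowerIneq at h
    rw [show (({f₂, f₄} : Finset (Finset ℕ)).biUnion id) = ({2,3,6,1,4,8} : Finset ℕ)
        from by decide,
      show f₀ \ ({2,3,6,1,4,8} : Finset ℕ) = (∅ : Finset ℕ) from by decide,
      Finset.sum_empty, Finset.card_empty,
      Finset.sum_pair (show f₂ ≠ f₄ from by decide),
      show (({f₂, f₄} : Finset (Finset ℕ))).card = 2 from by decide] at h
    norm_num at h
    linarith
  have hR1 : z {5} + z f₀ - z f₁ ≤ 1 := by
    have h := hfl f₁ e1E {f₀} (by unfold ValidFlowerNeighbors; decide)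
    unfold ExtFlowerIneq at h
    rw [Finset.singleton_biUnion, id_eq,
      show f₁ \ f₀ = ({5} : Finset ℕ) from by decide,
      Finset.sum_singleton, Finset.sum_singleton, Finset.card_singleton,
      Finset.card_singleton] at h
    norm_num at h
    linarith
  have hR2 : z {6} + z f₀ - z f₂ ≤ 1 := by
    have h := hfl f₂ e2E {f₀} (by unfold ValidFlowerNeighbors; decide)
    unfold ExtFlowerIneq at h
    rw [Finset.singleton_biUnion, id_eq,
      show f₂ \ f₀ = ({6} : Finset ℕ) from by decide,
      Finset.sum_singleton, Finset.sum_singleton, Finset.card_singleton,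
      Finset.card_singleton] at h
    norm_num at h
    linarith
  have hR3 : z {7} + z f₀ - z f₃ ≤ 1 := by
    have h := hfl f₃ e3E {f₀} (by unfold ValidFlowerNeighbors; decide)
    unfold ExtFlowerIneq at h
    rw [Finset.singleton_biUnion, id_eq,
      show f₃ \ f₀ = ({7} : Finset ℕ) from by decide,
      Finset.sum_singleton, Finset.sum_singleton, Finset.card_singleton,
      Finset.card_singleton] at h
    norm_num at h
    linarith
  have hR4 : z {8} + z f₀ - z f₄ ≤ 1 := by
    have h := hfl f₄ e4E {f₀} (by unfold ValidFlowerNeighbors; decide)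
    unfold ExtFlowerIneq at h
    rw [Finset.singleton_biUnion, id_eq,
      show f₄ \ f₀ = ({8} : Finset ℕ) from by decide,
      Finset.sum_singleton, Finset.sum_singleton, Finset.card_singleton,
      Finset.card_singleton] at h
    norm_num at h
    linarith
  -- generic machinery about gg and ww
  have hcnp : ∀ (bb : Bool) (t : ℝ), t ≤ 1 → (cond bb (t - 1) 0) ≤ 0 := by
    intro bb t ht
    cases bb <;> simp <;> linarith
  have hgg_le_ww : ∀ (b : B5) (S : Finset ℕ), gg z b S ≤ ww z S := fun b S =>
    le_trans (Finset.le_sup' (fun b : B5 => gg z b S) (Finset.mem_univ b)) (le_max_right _ _)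
  have hww_nonneg : ∀ S, 0 ≤ ww z S := fun S => le_max_left _ _
  have hgg_le_one : ∀ (b : B5) (S : Finset ℕ), S ⊆ G18.V → gg z b S ≤ 1 := by
    intro b S hS
    have h0 := hcnp b.1 (z f₀) (hzle1 f₀ e0E)
    have h1 := hcnp b.2.1 (z f₁) (hzle1 f₁ e1E)
    have h2 := hcnp b.2.2.1 (z f₂) (hzle1 f₂ e2E)
    have h3 := hcnp b.2.2.2.1 (z f₃) (hzle1 f₃ e3E)
    have h4 := hcnp b.2.2.2.2 (z f₄) (hzle1 f₄ e4E)
    have hs : ∑ v ∈ S, (if v ∈ UU b then (0:ℝ) else z {v} - 1) ≤ 0 := by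
      apply Finset.sum_nonpos
      intro v hv
      split
      · exact le_refl 0
      · linarith [hxle v (hS hv)]
    simp only [gg]
    linarith
  have hww_le_one : ∀ S : Finset ℕ, S ⊆ G18.V → ww z S ≤ 1 := fun S hS =>
    max_le zero_le_one (Finset.sup'_le _ _ fun b _ => hgg_le_one b S hS)
  have hgg_mono : ∀ (b : B5) (S J : Finset ℕ), S ⊆ G18.V → J ⊆ S →
      gg z b S ≤ gg z b J := by
    intro b S J hS hJS
    have hsum : ∑ v ∈ S \ J, (if v ∈ UU b then (0:ℝ) else z {v} - 1)
        + ∑ v ∈ J, (if v ∈ UU b then (0:ℝ) else z {v} - 1)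
        = ∑ v ∈ S, (if v ∈ UU b then (0:ℝ) else z {v} - 1) := Finset.sum_sdiff hJS
    have hnp : ∑ v ∈ S \ J, (if v ∈ UU b then (0:ℝ) else z {v} - 1) ≤ 0 := by
      apply Finset.sum_nonpos
      intro v hv
      have hvV : v ∈ G18.V := hS (Finset.mem_sdiff.mp hv).1
      split
      · exact le_refl 0
      · linarith [hxle v hvV]
    simp only [gg]
    linarith
  have hww_mono : ∀ S J : Finset ℕ, S ⊆ G18.V → J ⊆ S → ww z S ≤ ww z J := by
    intro S J hS hJS
    exact max_le (hww_nonneg J)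
      (Finset.sup'_le _ _ fun b _ => le_trans (hgg_mono b S J hS hJS) (hgg_le_ww b J))
  have hgg_super : ∀ (b c : B5) (J K : Finset ℕ), J ⊆ G18.V → K ⊆ G18.V → Disjoint J K →
      ∃ d : B5, gg z b J + gg z c K - 1 ≤ gg z d (J ∪ K) := by
    rintro ⟨b0, b1, b2, b3, b4⟩ ⟨c0, c1, c2, c3, c4⟩ J K hJV hKV hd
    refine ⟨(b0 || c0, b1 || c1, b2 || c2, b3 || c3, b4 || c4), ?_⟩
    have hcond : ∀ (p q : Bool) (t : ℝ), t ≤ 1 →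
        cond p (t - 1) 0 + cond q (t - 1) 0 ≤ cond (p || q) (t - 1) 0 := by
      intro p q t ht
      cases p <;> cases q <;> simp <;> linarith
    have hJ' : ∑ v ∈ J, (if v ∈ UU (b0, b1, b2, b3, b4) then (0:ℝ) else z {v} - 1)
        ≤ ∑ v ∈ J, (if v ∈ UU (b0 || c0, b1 || c1, b2 || c2, b3 || c3, b4 || c4) then (0:ℝ)
            else z {v} - 1) := by
      apply Finset.sum_le_sum
      intro v hv
      by_cases hvb : v ∈ UU (b0, b1, b2, b3, b4)
      · rw [if_pos hvb, if_pos (UU_or_left b0 b1 b2 b3 b4 c0 c1 c2 c3 c4 hvb)]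
      · rw [if_neg hvb]
        split
        · linarith [hxle v (hJV hv)]
        · exact le_refl _
    have hK' : ∑ v ∈ K, (if v ∈ UU (c0, c1, c2, c3, c4) then (0:ℝ) else z {v} - 1)
        ≤ ∑ v ∈ K, (if v ∈ UU (b0 || c0, b1 || c1, b2 || c2, b3 || c3, b4 || c4) then (0:ℝ)
            else z {v} - 1) := by
      apply Finset.sum_le_sum
      intro v hv
      by_cases hvb : v ∈ UU (c0, c1, c2, c3, c4)
      · rw [if_pos hvb, if_pos (UU_or_right b0 b1 b2 b3 b4 c0 c1 c2 c3 c4 hvb)]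
      · rw [if_neg hvb]
        split
        · linarith [hxle v (hKV hv)]
        · exact le_refl _
    have hsum : ∑ v ∈ J ∪ K,
          (if v ∈ UU (b0 || c0, b1 || c1, b2 || c2, b3 || c3, b4 || c4) then (0:ℝ)
            else z {v} - 1)
        = ∑ v ∈ J, (if v ∈ UU (b0 || c0, b1 || c1, b2 || c2, b3 || c3, b4 || c4) then (0:ℝ)
            else z {v} - 1)
          + ∑ v ∈ K, (if v ∈ UU (b0 || c0, b1 || c1, b2 || c2, b3 || c3, b4 || c4) then (0:ℝ)
            else z {v} - 1) := Finset.sum_union hd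
    have h0 := hcond b0 c0 (z f₀) (hzle1 f₀ e0E)
    have h1 := hcond b1 c1 (z f₁) (hzle1 f₁ e1E)
    have h2 := hcond b2 c2 (z f₂) (hzle1 f₂ e2E)
    have h3 := hcond b3 c3 (z f₃) (hzle1 f₃ e3E)
    have h4 := hcond b4 c4 (z f₄) (hzle1 f₄ e4E)
    simp only [gg]
    linarith
  have hww_super : ∀ J K : Finset ℕ, J ⊆ G18.V → K ⊆ G18.V → Disjoint J K →
      ww z J + ww z K - 1 ≤ ww z (J ∪ K) := by
    intro J K hJV hKV hd
    rcases le_or_gt (Finset.univ.sup' Finset.univ_nonempty fun b : B5 => gg z b J) 0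
      with hsJ | hsJ
    · have h1 : ww z J = 0 := max_eq_left hsJ
      rw [h1]
      linarith [hww_le_one K hKV, hww_nonneg (J ∪ K)]
    rcases le_or_gt (Finset.univ.sup' Finset.univ_nonempty fun b : B5 => gg z b K) 0
      with hsK | hsK
    · have h1 : ww z K = 0 := max_eq_left hsK
      rw [h1]
      linarith [hww_le_one J hJV, hww_nonneg (J ∪ K)]
    · obtain ⟨bj, -, hbj⟩ := Finset.exists_mem_eq_sup' Finset.univ_nonempty
        (fun b : B5 => gg z b J)
      obtain ⟨bk, -, hbk⟩ := Finset.exists_mem_eq_sup' Finset.univ_nonempty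
        (fun b : B5 => gg z b K)
      have h1 : ww z J = gg z bj J := by
        show max 0 _ = _
        rw [max_eq_right hsJ.le, hbj]
      have h2 : ww z K = gg z bk K := by
        show max 0 _ = _
        rw [max_eq_right hsK.le, hbk]
      obtain ⟨d, hdle⟩ := hgg_super bj bk J K hJV hKV hd
      calc ww z J + ww z K - 1 = gg z bj J + gg z bk K - 1 := by rw [h1, h2]
        _ ≤ gg z d (J ∪ K) := hdle
        _ ≤ ww z (J ∪ K) := hgg_le_ww d (J ∪ K)
  -- boundary values: singletons
  have hww_singleton : ∀ v ∈ G18.V, ww z {v} = z {v} := by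
    intro v hv
    have hx0v : 0 ≤ z {v} := hx0 v hv
    apply le_antisymm
    · apply max_le hx0v
      apply Finset.sup'_le
      intro b _hb
      have hc0 := hcnp b.1 (z f₀) (hzle1 f₀ e0E)
      have hc1 := hcnp b.2.1 (z f₁) (hzle1 f₁ e1E)
      have hc2 := hcnp b.2.2.1 (z f₂) (hzle1 f₂ e2E)
      have hc3 := hcnp b.2.2.2.1 (z f₃) (hzle1 f₃ e3E)
      have hc4 := hcnp b.2.2.2.2 (z f₄) (hzle1 f₄ e4E)
      by_cases hvb : v ∈ UU b
      · have hsum : ∑ u ∈ ({v} : Finset ℕ), (if u ∈ UU b then (0:ℝ) else z {u} - 1) = 0 := by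
          rw [Finset.sum_singleton, if_pos hvb]
        rcases mem_UU.mp hvb with ⟨hb, hm⟩ | ⟨hb, hm⟩ | ⟨hb, hm⟩ | ⟨hb, hm⟩ | ⟨hb, hm⟩
        · simp only [gg]
          rw [hsum, hb]
          simp only [cond_true]
          linarith [hub f₀ e0E v hm]
        · simp only [gg]
          rw [hsum, hb]
          simp only [cond_true]
          linarith [hub f₁ e1E v hm]
        · simp only [gg]
          rw [hsum, hb]
          simp only [cond_true]
          linarith [hub f₂ e2E v hm]
        · simp only [gg]
          rw [hsum, hb]
          simp only [cond_true]
          linarith [hub f₃ e3E v hm]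
        · simp only [gg]
          rw [hsum, hb]
          simp only [cond_true]
          linarith [hub f₄ e4E v hm]
      · have hsum : ∑ u ∈ ({v} : Finset ℕ), (if u ∈ UU b then (0:ℝ) else z {u} - 1)
            = z {v} - 1 := by
          rw [Finset.sum_singleton, if_neg hvb]
        simp only [gg]
        rw [hsum]
        linarith
    · have hgen : gg z (false, false, false, false, false) {v} = z {v} := by
        simp only [gg, UU, cond_false, Finset.union_empty, Finset.empty_union]
        rw [Finset.sum_singleton, if_neg (Finset.notMem_empty v)]
        ring
      calc z {v} = gg z (false, false, false, false, false) {v} := hgen.symm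
        _ ≤ ww z {v} := hgg_le_ww _ _
  -- membership facts
  have m10 : ((1:ℕ) ∈ f₀) = True := eq_true (by decide)
  have m11 : ((1:ℕ) ∈ f₁) = True := eq_true (by decide)
  have m12 : ((1:ℕ) ∈ f₂) = False := eq_false (by decide)
  have m13 : ((1:ℕ) ∈ f₃) = False := eq_false (by decide)
  have m14 : ((1:ℕ) ∈ f₄) = True := eq_true (by decide)
  have m20 : ((2:ℕ) ∈ f₀) = True := eq_true (by decide)
  have m21 : ((2:ℕ) ∈ f₁) = True := eq_true (by decide)
  have m22 : ((2:ℕ) ∈ f₂) = True := eq_true (by decide)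
  have m23 : ((2:ℕ) ∈ f₃) = False := eq_false (by decide)
  have m24 : ((2:ℕ) ∈ f₄) = False := eq_false (by decide)
  have m30 : ((3:ℕ) ∈ f₀) = True := eq_true (by decide)
  have m31 : ((3:ℕ) ∈ f₁) = False := eq_false (by decide)
  have m32 : ((3:ℕ) ∈ f₂) = True := eq_true (by decide)
  have m33 : ((3:ℕ) ∈ f₃) = True := eq_true (by decide)
  have m34 : ((3:ℕ) ∈ f₄) = False := eq_false (by decide)
  have m40 : ((4:ℕ) ∈ f₀) = True := eq_true (by decide)
  have m41 : ((4:ℕ) ∈ f₁) = False := eq_false (by decide)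
  have m42 : ((4:ℕ) ∈ f₂) = False := eq_false (by decide)
  have m43 : ((4:ℕ) ∈ f₃) = True := eq_true (by decide)
  have m44 : ((4:ℕ) ∈ f₄) = True := eq_true (by decide)
  have m50 : ((5:ℕ) ∈ f₀) = False := eq_false (by decide)
  have m51 : ((5:ℕ) ∈ f₁) = True := eq_true (by decide)
  have m52 : ((5:ℕ) ∈ f₂) = False := eq_false (by decide)
  have m53 : ((5:ℕ) ∈ f₃) = False := eq_false (by decide)
  have m54 : ((5:ℕ) ∈ f₄) = False := eq_false (by decide)
  have m60 : ((6:ℕ) ∈ f₀) = False := eq_false (by decide)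
  have m61 : ((6:ℕ) ∈ f₁) = False := eq_false (by decide)
  have m62 : ((6:ℕ) ∈ f₂) = True := eq_true (by decide)
  have m63 : ((6:ℕ) ∈ f₃) = False := eq_false (by decide)
  have m64 : ((6:ℕ) ∈ f₄) = False := eq_false (by decide)
  have m70 : ((7:ℕ) ∈ f₀) = False := eq_false (by decide)
  have m71 : ((7:ℕ) ∈ f₁) = False := eq_false (by decide)
  have m72 : ((7:ℕ) ∈ f₂) = False := eq_false (by decide)
  have m73 : ((7:ℕ) ∈ f₃) = True := eq_true (by decide)
  have m74 : ((7:ℕ) ∈ f₄) = False := eq_false (by decide)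
  have m80 : ((8:ℕ) ∈ f₀) = False := eq_false (by decide)
  have m81 : ((8:ℕ) ∈ f₁) = False := eq_false (by decide)
  have m82 : ((8:ℕ) ∈ f₂) = False := eq_false (by decide)
  have m83 : ((8:ℕ) ∈ f₃) = False := eq_false (by decide)
  have m84 : ((8:ℕ) ∈ f₄) = True := eq_true (by decide)
  -- boundary values: edges
  have hb0 : ∀ b : B5, gg z b f₀ ≤ z f₀ := by
    rintro ⟨b0, b1, b2, b3, b4⟩
    cases b0 <;> cases b1 <;> cases b2 <;> cases b3 <;> cases b4 <;>
      (simp only [gg, UU, cond_true, cond_false, Finset.union_empty, Finset.empty_union];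
       rw [sum_f₀]; simp only [Finset.mem_union, m10, m11, m12, m13, m14, m20, m21, m22, m23, m24, m30, m31, m32, m33, m34, m40, m41, m42, m43, m44, m50, m51, m52, m53, m54, m60, m61, m62, m63, m64, m70, m71, m72, m73, m74, m80, m81, m82, m83, m84, Finset.notMem_empty, or_true, true_or, or_false, false_or, or_self, if_true, if_false] <;> linarith)
  have hb1 : ∀ b : B5, gg z b f₁ ≤ z f₁ := by
    rintro ⟨b0, b1, b2, b3, b4⟩
    cases b0 <;> cases b1 <;> cases b2 <;> cases b3 <;> cases b4 <;>
      (simp only [gg, UU, cond_true, cond_false, Finset.union_empty, Finset.empty_union];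
       rw [sum_f₁]; simp only [Finset.mem_union, m10, m11, m12, m13, m14, m20, m21, m22, m23, m24, m30, m31, m32, m33, m34, m40, m41, m42, m43, m44, m50, m51, m52, m53, m54, m60, m61, m62, m63, m64, m70, m71, m72, m73, m74, m80, m81, m82, m83, m84, Finset.notMem_empty, or_true, true_or, or_false, false_or, or_self, if_true, if_false] <;> linarith)
  have hb2 : ∀ b : B5, gg z b f₂ ≤ z f₂ := by
    rintro ⟨b0, b1, b2, b3, b4⟩
    cases b0 <;> cases b1 <;> cases b2 <;> cases b3 <;> cases b4 <;>
      (simp only [gg, UU, cond_true, cond_false, Finset.union_empty, Finset.empty_union];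
       rw [sum_f₂]; simp only [Finset.mem_union, m10, m11, m12, m13, m14, m20, m21, m22, m23, m24, m30, m31, m32, m33, m34, m40, m41, m42, m43, m44, m50, m51, m52, m53, m54, m60, m61, m62, m63, m64, m70, m71, m72, m73, m74, m80, m81, m82, m83, m84, Finset.notMem_empty, or_true, true_or, or_false, false_or, or_self, if_true, if_false] <;> linarith)
  have hb3 : ∀ b : B5, gg z b f₃ ≤ z f₃ := by
    rintro ⟨b0, b1, b2, b3, b4⟩
    cases b0 <;> cases b1 <;> cases b2 <;> cases b3 <;> cases b4 <;>
      (simp only [gg, UU, cond_true, cond_false, Finset.union_empty, Finset.empty_union];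
       rw [sum_f₃]; simp only [Finset.mem_union, m10, m11, m12, m13, m14, m20, m21, m22, m23, m24, m30, m31, m32, m33, m34, m40, m41, m42, m43, m44, m50, m51, m52, m53, m54, m60, m61, m62, m63, m64, m70, m71, m72, m73, m74, m80, m81, m82, m83, m84, Finset.notMem_empty, or_true, true_or, or_false, false_or, or_self, if_true, if_false] <;> linarith)
  have hb4 : ∀ b : B5, gg z b f₄ ≤ z f₄ := by
    rintro ⟨b0, b1, b2, b3, b4⟩
    cases b0 <;> cases b1 <;> cases b2 <;> cases b3 <;> cases b4 <;>
      (simp only [gg, UU, cond_true, cond_false, Finset.union_empty, Finset.empty_union];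
       rw [sum_f₄]; simp only [Finset.mem_union, m10, m11, m12, m13, m14, m20, m21, m22, m23, m24, m30, m31, m32, m33, m34, m40, m41, m42, m43, m44, m50, m51, m52, m53, m54, m60, m61, m62, m63, m64, m70, m71, m72, m73, m74, m80, m81, m82, m83, m84, Finset.notMem_empty, or_true, true_or, or_false, false_or, or_self, if_true, if_false] <;> linarith)
  have hwit0 : gg z (true, false, false, false, false) f₀ = z f₀ := by
    simp only [gg, UU, cond_true, cond_false, Finset.union_empty, Finset.empty_union]
    rw [sum_f₀]
    simp only [Finset.mem_union, m10, m11, m12, m13, m14, m20, m21, m22, m23, m24, m30, m31, m32, m33, m34, m40, m41, m42, m43, m44, m50, m51, m52, m53, m54, m60, m61, m62, m63, m64, m70, m71, m72, m73, m74, m80, m81, m82, m83, m84, Finset.notMem_empty, or_true, true_or, or_false, false_or, or_self, if_true, if_false]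
    ring
  have hwit1 : gg z (false, true, false, false, false) f₁ = z f₁ := by
    simp only [gg, UU, cond_true, cond_false, Finset.union_empty, Finset.empty_union]
    rw [sum_f₁]
    simp only [Finset.mem_union, m10, m11, m12, m13, m14, m20, m21, m22, m23, m24, m30, m31, m32, m33, m34, m40, m41, m42, m43, m44, m50, m51, m52, m53, m54, m60, m61, m62, m63, m64, m70, m71, m72, m73, m74, m80, m81, m82, m83, m84, Finset.notMem_empty, or_true, true_or, or_false, false_or, or_self, if_true, if_false]
    ring
  have hwit2 : gg z (false, false, true, false, false) f₂ = z f₂ := by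
    simp only [gg, UU, cond_true, cond_false, Finset.union_empty, Finset.empty_union]
    rw [sum_f₂]
    simp only [Finset.mem_union, m10, m11, m12, m13, m14, m20, m21, m22, m23, m24, m30, m31, m32, m33, m34, m40, m41, m42, m43, m44, m50, m51, m52, m53, m54, m60, m61, m62, m63, m64, m70, m71, m72, m73, m74, m80, m81, m82, m83, m84, Finset.notMem_empty, or_true, true_or, or_false, false_or, or_self, if_true, if_false]
    ring
  have hwit3 : gg z (false, false, false, true, false) f₃ = z f₃ := by
    simp only [gg, UU, cond_true, cond_false, Finset.union_empty, Finset.empty_union]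
    rw [sum_f₃]
    simp only [Finset.mem_union, m10, m11, m12, m13, m14, m20, m21, m22, m23, m24, m30, m31, m32, m33, m34, m40, m41, m42, m43, m44, m50, m51, m52, m53, m54, m60, m61, m62, m63, m64, m70, m71, m72, m73, m74, m80, m81, m82, m83, m84, Finset.notMem_empty, or_true, true_or, or_false, false_or, or_self, if_true, if_false]
    ring
  have hwit4 : gg z (false, false, false, false, true) f₄ = z f₄ := by
    simp only [gg, UU, cond_true, cond_false, Finset.union_empty, Finset.empty_union]
    rw [sum_f₄]
    simp only [Finset.mem_union, m10, m11, m12, m13, m14, m20, m21, m22, m23, m24, m30, m31, m32, m33, m34, m40, m41, m42, m43, m44, m50, m51, m52, m53, m54, m60, m61, m62, m63, m64, m70, m71, m72, m73, m74, m80, m81, m82, m83, m84, Finset.notMem_empty, or_true, true_or, or_false, false_or, or_self, if_true, if_false]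
    ring
  have hEdge : ∀ e ∈ G18.E, ww z e = z e := by
    intro e he
    have he' : e = f₀ ∨ e = f₁ ∨ e = f₂ ∨ e = f₃ ∨ e = f₄ := by
      have hE : G18.E = {f₀, f₁, f₂, f₃, f₄} := rfl
      rw [hE] at he
      simpa using he
    rcases he' with rfl | rfl | rfl | rfl | rfl
    · exact le_antisymm (max_le hn0 (Finset.sup'_le _ _ fun b _ => hb0 b))
        (hwit0 ▸ hgg_le_ww (true, false, false, false, false) f₀)
    · exact le_antisymm (max_le hn1 (Finset.sup'_le _ _ fun b _ => hb1 b))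
        (hwit1 ▸ hgg_le_ww (false, true, false, false, false) f₁)
    · exact le_antisymm (max_le hn2 (Finset.sup'_le _ _ fun b _ => hb2 b))
        (hwit2 ▸ hgg_le_ww (false, false, true, false, false) f₂)
    · exact le_antisymm (max_le hn3 (Finset.sup'_le _ _ fun b _ => hb3 b))
        (hwit3 ▸ hgg_le_ww (false, false, false, true, false) f₃)
    · exact le_antisymm (max_le hn4 (Finset.sup'_le _ _ fun b _ => hb4 b))
        (hwit4 ▸ hgg_le_ww (false, false, false, false, true) f₄)
  -- assemble
  refine ⟨ww z, hww_singleton, hEdge, ?_⟩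
  intro f hf
  have hfV : f ⊆ G18.V := by
    rcases Finset.mem_union.mp hf with h | h
    · exact G18.edge_sub f h
    · exact M.ebar_sub f h
  have hun := M.union_eq f hf
  have hdisj := M.disj f hf
  have hJf : M.J f ⊆ f := by
    conv_rhs => rw [← hun]
    exact Finset.subset_union_left
  have hKf : M.K f ⊆ f := by
    conv_rhs => rw [← hun]
    exact Finset.subset_union_right
  refine ⟨hww_nonneg f, ?_, ?_, ?_⟩
  · have h := hww_super (M.J f) (M.K f) (hJf.trans hfV) (hKf.trans hfV) hdisj
    rw [hun] at h
    exact h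
  · exact hww_mono f (M.J f) hfV hJf
  · exact hww_mono f (M.K f) hfV hKf

end Part2Aux

/-- for every recursive McCormick relaxation of the example, some point of
`MP^RMC_G` violates one of the six flower inequalities centered at `e₀`; in particular the
flower relaxation is a strict subset of `MP^RMC_G` for every RMC. -/
theorem flower_stronger_than_every_RMC_example (M : RMC G18) :
    (∃ z : Finset ℕ → ℝ, M.MPRMC z ∧
      ¬ ((∀ e ∈ ({f₁, f₂, f₃, f₄} : Finset (Finset ℕ)),
            (∑ v ∈ f₀ \ e, z {v}) + z e - z f₀ ≤ 2) ∧
          z f₁ + z f₃ - z f₀ ≤ 1 ∧ z f₂ + z f₄ - z f₀ ≤ 1) ∧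
      ¬ MPF G18 z) ∧
    (∀ z : Finset ℕ → ℝ, MPF G18 z → M.MPRMC z) := by
  exact ⟨part1 M, fun z hz => part2 M z hz⟩
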